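/- Let c > 1 and let φ : (0,1) → ℝ⁺ be an integrable function belonging to A₁((0,1),c). Let φ* : (0,1) → ℝ be the decreasing rearrangement of φ (the unique decreasing, right-continuous function on (0,1) equimeasurable with φ). Then φ* also belongs to A₁((0,1),c); in particular, (1/t)∫₀ᵗ φ*(u) du ≤ c·φ*(t) for every t ∈ (0,1). -/

import Mathlib

open MeasureTheory Set Filter
open scoped ENNReal NNReal

private lemma open_sub_ball {V : Set ℝ} (hV : IsOpen V) (hVsub : V ⊆ Ioo 0 1)
    {x : ℝ} (hx : x ∈ V) :
    ∃ ε > 0, 0 ≤ x - ε ∧ x + ε ≤ 1 ∧ Ioo (x - ε) (x + ε) ⊆ V := by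
  obtain ⟨ε, hε, hball⟩ := Metric.isOpen_iff.1 hV x hx
  rw [Real.ball_eq_Ioo] at hball
  have hx01 : x ∈ Ioo (0:ℝ) 1 := hVsub hx
  have h1 : 0 ≤ x - ε := by
    by_contra h
    push_neg at h
    have hz : (x - ε) / 2 ∈ Ioo (x - ε) (x + ε) := by
      constructor
      · linarith
      · nlinarith [hx01.1]
    have := (hVsub (hball hz)).1
    linarith
  have h2 : x + ε ≤ 1 := by
    by_contra h
    push_neg at h
    have hz : (x + ε + 1) / 2 ∈ Ioo (x - ε) (x + ε) := by
      constructor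
      · nlinarith [hx01.2]
      · linarith
    have := (hVsub (hball hz)).2
    linarith
  exact ⟨ε, hε, h1, h2, hball⟩

private lemma cover_bound (g : ℝ → ℝ) (c m : ℝ) (hcm : 0 ≤ c * m)
    (hg0 : 0 ≤ᵐ[volume.restrict (Ioo (0:ℝ) 1)] g)
    (hgint : IntegrableOn g (Ioo (0:ℝ) 1))
    (U : Set ℝ) (hUopen : IsOpen U) (hUsub : U ⊆ Ioo 0 1) (hUlt : volume U < 1)
    (hKIB : ∀ a b : ℝ, 0 ≤ a → a < b → b ≤ 1 → volume (Ioo a b \ U) ≠ 0 →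
      ∫ x in Ioo a b, g x ≤ c * m * (b - a)) :
    ∫ x in U, g x ≤ c * m * (volume U).toReal := by
  classical
  set P : ℚ × ℚ → Prop :=
    fun p => 0 ≤ (p.1 : ℝ) ∧ (p.2 : ℝ) ≤ 1 ∧ volume (Ioo (p.1 : ℝ) (p.2 : ℝ) \ U) = 0 with hP
  set W : Set ℝ := ⋃ (p : ℚ × ℚ) (_ : P p), Ioo (p.1 : ℝ) (p.2 : ℝ) with hW
  have hWopen : IsOpen W := isOpen_iUnion fun p => isOpen_iUnion fun _ => isOpen_Ioo
  have hWsub : W ⊆ Ioo 0 1 := by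
    intro x hx
    simp only [hW, mem_iUnion] at hx
    obtain ⟨p, hp, hx⟩ := hx
    exact ⟨lt_of_le_of_lt hp.1 hx.1, lt_of_lt_of_le hx.2 hp.2.1⟩
  have hfill : ∀ v w : ℝ, 0 ≤ v → w ≤ 1 → volume (Ioo v w \ U) = 0 → Ioo v w ⊆ W := by
    intro v w hv hw h0 z hz
    obtain ⟨p, hp1, hp2⟩ := exists_rat_btwn hz.1
    obtain ⟨q, hq1, hq2⟩ := exists_rat_btwn hz.2
    simp only [hW, mem_iUnion]
    refine ⟨(p, q), ⟨le_of_lt (lt_of_le_of_lt hv hp1), le_trans (le_of_lt hq2) hw, ?_⟩, hp2, hq1⟩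
    refine measure_mono_null (fun y hy => ?_) h0
    exact ⟨⟨lt_trans hp1 hy.1.1, lt_trans hy.1.2 hq2⟩, hy.2⟩
  have hUW : U ⊆ W := by
    intro x hx
    obtain ⟨ε, hε, h1, h2, hball⟩ := open_sub_ball hUopen hUsub hx
    have h0 : volume (Ioo (x - ε) (x + ε) \ U) = 0 := by
      rw [diff_eq_empty.2 hball]; exact measure_empty
    exact hfill _ _ h1 h2 h0 ⟨by linarith, by linarith⟩
  have hWU0 : volume (W \ U) = 0 := by
    refine measure_mono_null (t := ⋃ (p : ℚ × ℚ) (_ : P p), (Ioo (p.1:ℝ) (p.2:ℝ) \ U)) ?_ ?_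
    · intro x hx
      simp only [hW, mem_diff, mem_iUnion] at hx ⊢
      obtain ⟨⟨p, hp, hxp⟩, hxu⟩ := hx
      exact ⟨p, hp, hxp, hxu⟩
    · exact measure_iUnion_null fun p => measure_iUnion_null fun hp => hp.2.2
  have hWvol : volume W ≤ volume U := by
    calc volume W ≤ volume (U ∪ (W \ U)) := measure_mono (fun x hx => by
          by_cases h : x ∈ U
          · exact Or.inl h
          · exact Or.inr ⟨hx, h⟩)
      _ ≤ volume U + volume (W \ U) := measure_union_le _ _
      _ = volume U := by rw [hWU0, add_zero]
  have hUfin : volume U ≠ ⊤ := (lt_of_lt_of_le hUlt le_top).ne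
  have hWfin : volume W ≠ ⊤ := (lt_of_le_of_lt hWvol (lt_of_lt_of_le hUlt le_top)).ne
  set R : ℝ → Set ℝ := fun x => {y | y ≤ 1 ∧ Ioo x y ⊆ W} with hR
  set Lft : ℝ → Set ℝ := fun x => {y | 0 ≤ y ∧ Ioo y x ⊆ W} with hL
  set rp : ℝ → ℝ := fun x => sSup (R x) with hrp
  set lp : ℝ → ℝ := fun x => sInf (Lft x) with hlp
  have hRbdd : ∀ x, BddAbove (R x) := fun x => ⟨1, fun y hy => hy.1⟩
  have hLbdd : ∀ x, BddBelow (Lft x) := fun x => ⟨0, fun y hy => hy.1⟩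
  have hRmem : ∀ x ∈ W, ∃ ε > 0, (x + ε) ∈ R x ∧ (x - ε) ∈ Lft x := by
    intro x hx
    obtain ⟨ε, hε, h1, h2, hsub⟩ := open_sub_ball hWopen hWsub hx
    refine ⟨ε, hε, ⟨h2, fun z hz => hsub ⟨by linarith [hz.1], hz.2⟩⟩,
      ⟨h1, fun z hz => hsub ⟨hz.1, by linarith [hz.2]⟩⟩⟩
  have hlt : ∀ x ∈ W, lp x < x ∧ x < rp x ∧ 0 ≤ lp x ∧ rp x ≤ 1 := by
    intro x hx
    obtain ⟨ε, hε, hRm, hLm⟩ := hRmem x hx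
    refine ⟨lt_of_le_of_lt (csInf_le (hLbdd x) hLm) (by linarith),
      lt_of_lt_of_le (by linarith) (le_csSup (hRbdd x) hRm),
      le_csInf ⟨_, hLm⟩ fun y hy => hy.1,
      csSup_le ⟨_, hRm⟩ fun y hy => hy.1⟩
  have hcompsub : ∀ x ∈ W, Ioo (lp x) (rp x) ⊆ W := by
    intro x hx z hz
    obtain ⟨ε, hε, hRm, hLm⟩ := hRmem x hx
    rcases lt_trichotomy z x with h | h | h
    · obtain ⟨y, hy, hyz⟩ := exists_lt_of_csInf_lt ⟨_, hLm⟩ hz.1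
      exact hy.2 ⟨hyz, h⟩
    · exact h ▸ hx
    · obtain ⟨y, hy, hzy⟩ := exists_lt_of_lt_csSup ⟨_, hRm⟩ hz.2
      exact hy.2 ⟨h, hzy⟩
  have hmaxR : ∀ x ∈ W, ∀ δ > 0, rp x + δ ≤ 1 →
      volume (Ioo (lp x) (rp x + δ) \ U) ≠ 0 := by
    intro x hx δ hδ hle h0
    have h1 : Ioo (lp x) (rp x + δ) ⊆ W := hfill _ _ (hlt x hx).2.2.1 hle h0
    have h2 : (rp x + δ) ∈ R x :=
      ⟨hle, fun z hz => h1 ⟨lt_trans (hlt x hx).1 hz.1, hz.2⟩⟩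
    have := le_csSup (hRbdd x) h2
    linarith
  have hmaxL : ∀ x ∈ W, ∀ δ > 0, 0 ≤ lp x - δ →
      volume (Ioo (lp x - δ) (rp x) \ U) ≠ 0 := by
    intro x hx δ hδ hle h0
    have h1 : Ioo (lp x - δ) (rp x) ⊆ W := hfill _ _ hle (hlt x hx).2.2.2 h0
    have h2 : (lp x - δ) ∈ Lft x :=
      ⟨hle, fun z hz => h1 ⟨hz.1, lt_trans hz.2 (hlt x hx).2.1⟩⟩
    have := csInf_le (hLbdd x) h2
    linarith
  have hrigid : ∀ x ∈ W, ∀ z ∈ Ioo (lp x) (rp x), lp z = lp x ∧ rp z = rp x := by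
    intro x hx z hz
    have hzW : z ∈ W := hcompsub x hx hz
    obtain ⟨ε, hε, hRmz, hLmz⟩ := hRmem z hzW
    constructor
    · refine le_antisymm ?_ ?_
      · exact csInf_le (hLbdd z) ⟨(hlt x hx).2.2.1,
          fun w hw => hcompsub x hx ⟨hw.1, lt_trans hw.2 hz.2⟩⟩
      · refine le_csInf ⟨_, hLmz⟩ fun y hy => ?_
        rcases le_or_gt x y with h | h
        · linarith [(hlt x hx).1]
        · refine csInf_le (hLbdd x) ⟨hy.1, fun w hw => ?_⟩
          rcases lt_or_ge w z with h2 | h2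
          · exact hy.2 ⟨hw.1, h2⟩
          · exact hcompsub x hx ⟨lt_of_lt_of_le hz.1 h2, lt_trans hw.2 (hlt x hx).2.1⟩
    · refine le_antisymm ?_ ?_
      · refine csSup_le ⟨_, hRmz⟩ fun y hy => ?_
        rcases le_or_gt y x with h | h
        · linarith [(hlt x hx).2.1]
        · refine le_csSup (hRbdd x) (⟨hy.1, fun w hw => ?_⟩ : y ∈ R x)
          rcases lt_or_ge z w with h2 | h2
          · exact hy.2 ⟨h2, hw.2⟩
          · exact hcompsub x hx ⟨lt_trans (hlt x hx).1 hw.1, lt_of_le_of_lt h2 hz.2⟩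
      · exact le_csSup (hRbdd z) ⟨(hlt x hx).2.2.2,
          fun w hw => hcompsub x hx ⟨lt_trans hz.1 hw.1, hw.2⟩⟩
  -- integral bound on each component
  have hKint : ∀ x ∈ W, ∫ t in Ioo (lp x) (rp x), g t ≤ c * m * (rp x - lp x) := by
    intro x hx
    obtain ⟨hlx, hxr, hl0, hr1⟩ := hlt x hx
    have hlr : lp x < rp x := lt_trans hlx hxr
    have hmono : ∀ v w : ℝ, 0 ≤ v → w ≤ 1 → Ioo (lp x) (rp x) ⊆ Ioo v w →
        v < w → volume (Ioo v w \ U) ≠ 0 → ∫ t in Ioo (lp x) (rp x), g t ≤ c * m * (w - v) := by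
      intro v w hv hw hsub hvw hne
      have hseg : Ioo v w ⊆ Ioo (0:ℝ) 1 := fun y hy =>
        ⟨lt_of_le_of_lt hv hy.1, lt_of_lt_of_le hy.2 hw⟩
      have h1 : ∫ t in Ioo (lp x) (rp x), g t ≤ ∫ t in Ioo v w, g t := by
        refine setIntegral_mono_set (hgint.mono_set hseg)
          (ae_restrict_of_ae_restrict_of_subset hseg hg0) (HasSubset.Subset.eventuallyLE hsub)
      exact le_trans h1 (hKIB v w hv hvw hw hne)
    rcases lt_or_ge (rp x) 1 with h1 | h1
    · -- extend right by δ n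
      have hmain : ∀ n : ℕ, ∫ t in Ioo (lp x) (rp x), g t ≤
          c * m * (rp x - lp x) + c * m * ((1 - rp x) / (n + 1)) := by
        intro n
        have hδ : 0 < (1 - rp x) / ((n:ℝ) + 1) := div_pos (by linarith) (by positivity)
        have hle : rp x + (1 - rp x) / (n + 1) ≤ 1 := by
          have h1n : (0:ℝ) < (n:ℝ) + 1 := by positivity
          have : (1 - rp x) / ((n:ℝ) + 1) ≤ 1 - rp x := by
            rw [div_le_iff₀ h1n]; nlinarith
          linarith
        have := hmono (lp x) (rp x + (1 - rp x) / (n + 1)) hl0 hle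
          (fun y hy => ⟨hy.1, by linarith [hy.2]⟩) (by linarith)
          (hmaxR x hx _ hδ hle)
        linarith [this, (by ring : c * m * (rp x + (1 - rp x) / (n + 1) - lp x)
          = c * m * (rp x - lp x) + c * m * ((1 - rp x) / (n + 1)))]
      have h0 : Tendsto (fun n : ℕ => c * m * ((1 - rp x) / (n + 1))) atTop (nhds 0) := by
        have h := tendsto_one_div_add_atTop_nhds_zero_nat.const_mul (c * m * (1 - rp x))
        rw [mul_zero] at h
        refine h.congr fun n => ?_
        field_simp
      have htt : Tendsto (fun n : ℕ => c * m * (rp x - lp x)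
          + c * m * ((1 - rp x) / (n + 1))) atTop (nhds (c * m * (rp x - lp x))) := by
        simpa using tendsto_const_nhds.add h0
      exact ge_of_tendsto' htt hmain
    · rcases lt_or_ge 0 (lp x) with h2 | h2
      · -- extend left
        have hr1' : rp x = 1 := le_antisymm hr1 h1
        have hmain : ∀ n : ℕ, ∫ t in Ioo (lp x) (rp x), g t ≤
            c * m * (rp x - lp x) + c * m * (lp x / (n + 1)) := by
          intro n
          have hδ : 0 < lp x / (n + 1) := by positivity
          have hge : 0 ≤ lp x - lp x / (n + 1) := by
            have h1n : (0:ℝ) < (n:ℝ) + 1 := by positivity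
            rw [sub_nonneg, div_le_iff₀ h1n]
            nlinarith
          have := hmono (lp x - lp x / (n + 1)) (rp x) hge hr1
            (fun y hy => ⟨by linarith [hy.1], hy.2⟩) (by linarith)
            (hmaxL x hx _ hδ hge)
          linarith [this, (by ring : c * m * (rp x - (lp x - lp x / (n + 1)))
            = c * m * (rp x - lp x) + c * m * (lp x / (n + 1)))]
        have h0 : Tendsto (fun n : ℕ => c * m * (lp x / (n + 1))) atTop (nhds 0) := by
          have h := tendsto_one_div_add_atTop_nhds_zero_nat.const_mul (c * m * lp x)
          rw [mul_zero] at h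
          refine h.congr fun n => ?_
          field_simp
        have htt : Tendsto (fun n : ℕ => c * m * (rp x - lp x)
            + c * m * (lp x / (n + 1))) atTop (nhds (c * m * (rp x - lp x))) := by
          simpa using tendsto_const_nhds.add h0
        exact ge_of_tendsto' htt hmain
      · -- full interval
        have hl0' : lp x = 0 := le_antisymm h2 hl0
        have hr1' : rp x = 1 := le_antisymm hr1 h1
        have hne : volume (Ioo (0:ℝ) 1 \ U) ≠ 0 := by
          have hd : volume (Ioo (0:ℝ) 1 \ U) = volume (Ioo (0:ℝ) 1) - volume U :=
            measure_diff hUsub hUopen.measurableSet.nullMeasurableSet hUfin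
          rw [hd, Real.volume_Ioo]
          simp only [sub_zero, ENNReal.ofReal_one]
          intro hcontr
          exact absurd (tsub_eq_zero_iff_le.1 hcontr) (not_le.2 hUlt)
        have := hKIB 0 1 le_rfl one_pos le_rfl hne
        rw [hl0', hr1']
        simpa using this
  -- countable family of components
  set T : Set (ℝ × ℝ) := (fun q : ℚ => (lp (q : ℝ), rp (q : ℝ))) '' {q : ℚ | (q : ℝ) ∈ W}
    with hT
  have hTc : T.Countable := Set.Countable.image (Set.to_countable _) _
  have hTprop : ∀ p ∈ T, p.1 < p.2 ∧ Ioo p.1 p.2 ⊆ W ∧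
      (∫ t in Ioo p.1 p.2, g t ≤ c * m * (p.2 - p.1)) := by
    rintro p ⟨q, hq, rfl⟩
    exact ⟨lt_trans (hlt _ hq).1 (hlt _ hq).2.1, hcompsub _ hq, hKint _ hq⟩
  have hTcover : W = ⋃ p ∈ T, Ioo p.1 p.2 := by
    apply Subset.antisymm
    · intro x hx
      obtain ⟨q, hq1, hq2⟩ := exists_rat_btwn (hlt x hx).2.1
      have hqmem : (q : ℝ) ∈ Ioo (lp x) (rp x) := ⟨lt_trans (hlt x hx).1 hq1, hq2⟩
      have hqW : (q : ℝ) ∈ W := hcompsub x hx hqmem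
      have heq := hrigid x hx _ hqmem
      refine mem_biUnion (⟨q, hqW, rfl⟩ : (lp (q:ℝ), rp (q:ℝ)) ∈ T) ?_
      simp only [heq.1, heq.2]
      exact ⟨(hlt x hx).1, (hlt x hx).2.1⟩
    · intro x hx
      simp only [mem_iUnion] at hx
      obtain ⟨p, hp, hx⟩ := hx
      exact (hTprop p hp).2.1 hx
  have hTdisj : T.PairwiseDisjoint (fun p : ℝ × ℝ => Ioo p.1 p.2) := by
    rintro p₁ ⟨q₁, hq₁, rfl⟩ p₂ ⟨q₂, hq₂, rfl⟩ hne
    refine Set.disjoint_left.2 fun z hz₁ hz₂ => hne ?_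
    have e₁ := hrigid _ hq₁ z hz₁
    have e₂ := hrigid _ hq₂ z hz₂
    exact Prod.ext_iff.2 ⟨e₁.1.symm.trans e₂.1, e₁.2.symm.trans e₂.2⟩
  haveI := hTc.to_subtype
  have hmeas : ∀ i : T, MeasurableSet (Ioo (i : ℝ × ℝ).1 (i : ℝ × ℝ).2) :=
    fun i => measurableSet_Ioo
  have hdisj : Pairwise (Function.onFun Disjoint fun i : T => Ioo (i : ℝ × ℝ).1 (i : ℝ × ℝ).2) :=
    fun i j hij => hTdisj i.2 j.2 (fun h => hij (Subtype.ext h))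
  have hunion : ⋃ i : T, Ioo (i : ℝ × ℝ).1 (i : ℝ × ℝ).2 = W := by
    rw [hTcover]; exact (Set.biUnion_eq_iUnion T fun p _ => Ioo p.1 p.2).symm
  have hWint : IntegrableOn g W := hgint.mono_set hWsub
  have hsum : HasSum (fun i : T => ∫ t in Ioo (i : ℝ × ℝ).1 (i : ℝ × ℝ).2, g t)
      (∫ t in W, g t) := by
    have := hasSum_integral_iUnion hmeas hdisj (hunion ▸ hWint)
    rwa [hunion] at this
  have hvolsum : ∑' i : T, volume (Ioo (i : ℝ × ℝ).1 (i : ℝ × ℝ).2) = volume W := by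
    rw [← hunion]
    exact (measure_iUnion hdisj hmeas).symm
  have hlenfin : ∀ i : T, volume (Ioo (i : ℝ × ℝ).1 (i : ℝ × ℝ).2) ≠ ⊤ :=
    fun i => (lt_of_le_of_lt (le_of_eq (Real.volume_Ioo)) ENNReal.ofReal_lt_top).ne
  have hsummable2 : Summable (fun i : T => (volume (Ioo (i : ℝ × ℝ).1 (i : ℝ × ℝ).2)).toReal) :=
    ENNReal.summable_toReal (by rw [hvolsum]; exact hWfin)
  have hterm : ∀ i : T, ∫ t in Ioo (i : ℝ × ℝ).1 (i : ℝ × ℝ).2, g t ≤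
      c * m * (volume (Ioo (i : ℝ × ℝ).1 (i : ℝ × ℝ).2)).toReal := by
    intro i
    have hp := hTprop _ i.2
    rw [Real.volume_Ioo, ENNReal.toReal_ofReal (le_of_lt (sub_pos.2 hp.1))]
    exact hp.2.2
  have hWbound : ∫ t in W, g t ≤ c * m * (volume W).toReal := by
    have h1 : ∫ t in W, g t ≤ ∑' i : T, c * m *
        (volume (Ioo (i : ℝ × ℝ).1 (i : ℝ × ℝ).2)).toReal := by
      rw [← hsum.tsum_eq]
      exact Summable.tsum_le_tsum hterm hsum.summable (hsummable2.mul_left _)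
    calc ∫ t in W, g t ≤ _ := h1
      _ = c * m * ∑' i : T, (volume (Ioo (i : ℝ × ℝ).1 (i : ℝ × ℝ).2)).toReal := tsum_mul_left
      _ = c * m * (volume W).toReal := by
          rw [← ENNReal.tsum_toReal_eq hlenfin, hvolsum]
  have hfinal : ∫ t in U, g t ≤ ∫ t in W, g t :=
    setIntegral_mono_set hWint (ae_restrict_of_ae_restrict_of_subset hWsub hg0)
      (HasSubset.Subset.eventuallyLE hUW)
  refine le_trans hfinal (le_trans hWbound ?_)
  exact mul_le_mul_of_nonneg_left (ENNReal.toReal_mono hUfin hWvol) hcm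

/-- If `c > 1` and `φ : (0,1) → ℝ⁺` is integrable and belongs to
`A₁((0,1),c)`, and `ψ = φ*` is the decreasing rearrangement of `φ` (decreasing,
right-continuous on `(0,1)` and equimeasurable with `φ`), then `ψ` also belongs to
`A₁((0,1),c)`; in particular `(1/t)∫₀ᵗ ψ ≤ c·ψ(t)` for every `t ∈ (0,1)`. -/
theorem decreasing_rearrangement_is_A1 (c : ℝ) (hc : 1 < c) (φ ψ : ℝ → ℝ)
    (hpos : ∀ x ∈ Set.Ioo (0:ℝ) 1, 0 < φ x)
    (hint : IntegrableOn φ (Set.Ioo 0 1))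
    (hA1 : ∀ a b : ℝ, 0 ≤ a → a < b → b ≤ 1 →
      (b - a)⁻¹ * ∫ x in Set.Ioo a b, φ x ≤
        c * essInf φ (volume.restrict (Set.Ioo a b)))
    (hanti : AntitoneOn ψ (Set.Ioo 0 1))
    (hrc : ∀ t ∈ Set.Ioo (0:ℝ) 1, ContinuousWithinAt ψ (Set.Ici t) t)
    (hequi : ∀ lam : ℝ, 0 < lam →
      volume {x ∈ Set.Ioo (0:ℝ) 1 | lam < ψ x} =
        volume {x ∈ Set.Ioo (0:ℝ) 1 | lam < φ x}) :
    (∀ a b : ℝ, 0 ≤ a → a < b → b ≤ 1 →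
      (b - a)⁻¹ * ∫ x in Set.Ioo a b, ψ x ≤
        c * essInf ψ (volume.restrict (Set.Ioo a b))) ∧
    (∀ t ∈ Set.Ioo (0:ℝ) 1, t⁻¹ * ∫ u in Set.Ioo (0:ℝ) t, ψ u ≤ c * ψ t) := by
  have hc0 : (0:ℝ) < c := lt_trans one_pos hc
  have hIoo : MeasurableSet (Ioo (0:ℝ) 1) := measurableSet_Ioo
  have hvol01 : volume (Ioo (0:ℝ) 1) < ⊤ := by
    rw [Real.volume_Ioo]; exact ENNReal.ofReal_lt_top
  -- measurable representative of φ
  have hφaem : AEMeasurable φ (volume.restrict (Ioo (0:ℝ) 1)) :=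
    hint.aestronglyMeasurable.aemeasurable
  set g : ℝ → ℝ := hφaem.mk φ with hgdef
  have hgmeas : Measurable g := hφaem.measurable_mk
  have hgae : φ =ᵐ[volume.restrict (Ioo (0:ℝ) 1)] g := hφaem.ae_eq_mk
  have hgae' : ∀ a b : ℝ, 0 ≤ a → b ≤ 1 → φ =ᵐ[volume.restrict (Ioo a b)] g := by
    intro a b ha hb
    refine ae_restrict_of_ae_restrict_of_subset (fun x hx => ?_) hgae
    exact ⟨lt_of_le_of_lt ha hx.1, lt_of_lt_of_le hx.2 hb⟩
  have hgint : IntegrableOn g (Ioo (0:ℝ) 1) := (integrable_congr hgae).1 hint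
  have hg0 : ∀ᵐ x ∂(volume.restrict (Ioo (0:ℝ) 1)), 0 < g x := by
    filter_upwards [hgae, ae_restrict_mem hIoo] with x h1 h2
    rw [← h1]; exact hpos x h2
  have hg0' : 0 ≤ᵐ[volume.restrict (Ioo (0:ℝ) 1)] g := hg0.mono fun x h => h.le
  have hN : volume ({x | φ x ≠ g x} ∩ Ioo (0:ℝ) 1) = 0 := by
    have h := hgae
    rw [Filter.EventuallyEq, ae_iff, Measure.restrict_apply' hIoo] at h
    exact h
  have hsetφg : ∀ lam : ℝ,
      volume {x ∈ Ioo (0:ℝ) 1 | lam < g x} = volume {x ∈ Ioo (0:ℝ) 1 | lam < φ x} := by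
    intro lam
    apply measure_congr
    rw [ae_eq_set]
    constructor
    · refine measure_mono_null (fun x hx => ?_) hN
      refine ⟨fun heq => ?_, hx.1.1⟩
      exact hx.2 ⟨hx.1.1, heq ▸ hx.1.2⟩
    · refine measure_mono_null (fun x hx => ?_) hN
      refine ⟨fun heq => ?_, hx.1.1⟩
      exact hx.2 ⟨hx.1.1, heq ▸ hx.1.2⟩
  have hA1g : ∀ a b : ℝ, 0 ≤ a → a < b → b ≤ 1 →
      (b - a)⁻¹ * ∫ x in Ioo a b, g x ≤ c * essInf g (volume.restrict (Ioo a b)) := by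
    intro a b ha hab hb
    have h1 := hA1 a b ha hab hb
    rwa [integral_congr_ae (hgae' a b ha hb), essInf_congr_ae (hgae' a b ha hb)] at h1
  -- positivity of ψ on (0,1)
  have hψpos : ∀ x ∈ Ioo (0:ℝ) 1, 0 < ψ x := by
    intro x hx
    have hgood : volume {y ∈ Ioo (0:ℝ) 1 | 0 < g y} = 1 := by
      have hbad : volume ({y | ¬ 0 < g y} ∩ Ioo (0:ℝ) 1) = 0 := by
        have h := hg0
        rw [ae_iff, Measure.restrict_apply' hIoo] at h
        exact h
      have h1 : volume (Ioo (0:ℝ) 1) ≤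
          volume {y ∈ Ioo (0:ℝ) 1 | 0 < g y} + volume ({y | ¬ 0 < g y} ∩ Ioo (0:ℝ) 1) := by
        refine le_trans (measure_mono fun y hy => ?_) (measure_union_le _ _)
        by_cases h : 0 < g y
        · exact Or.inl ⟨hy, h⟩
        · exact Or.inr ⟨h, hy⟩
      rw [hbad, add_zero, Real.volume_Ioo, sub_zero, ENNReal.ofReal_one] at h1
      refine le_antisymm ?_ h1
      calc volume {y ∈ Ioo (0:ℝ) 1 | 0 < g y} ≤ volume (Ioo (0:ℝ) 1) :=
            measure_mono fun y hy => hy.1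
        _ = 1 := by rw [Real.volume_Ioo, sub_zero, ENNReal.ofReal_one]
    set A : ℕ → Set ℝ := fun n => {y ∈ Ioo (0:ℝ) 1 | 1 / (n + 1) < g y} with hA
    have hmono : Monotone A := by
      intro i j hij y hy
      refine ⟨hy.1, lt_of_le_of_lt ?_ hy.2⟩
      apply one_div_le_one_div_of_le (by positivity)
      have : (i:ℝ) ≤ j := Nat.cast_le.2 hij
      linarith
    have hcup : ⋃ n, A n = {y ∈ Ioo (0:ℝ) 1 | 0 < g y} := by
      ext y
      simp only [hA, mem_iUnion, mem_setOf_eq]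
      constructor
      · rintro ⟨n, h1, h2⟩
        exact ⟨h1, lt_trans (by positivity) h2⟩
      · rintro ⟨h1, h2⟩
        obtain ⟨n, hn⟩ := exists_nat_one_div_lt h2
        exact ⟨n, h1, hn⟩
    have htend := tendsto_measure_iUnion_atTop (μ := volume) hmono
    rw [hcup, hgood] at htend
    obtain ⟨n, hn⟩ := (htend.eventually (eventually_gt_nhds (ENNReal.ofReal_lt_one.2 hx.2))).exists
    have hlampos : (0:ℝ) < 1 / (n + 1) := by positivity
    have h1 : volume {y ∈ Ioo (0:ℝ) 1 | 1 / ((n:ℝ) + 1) < ψ y} = volume (A n) := by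
      rw [hequi _ hlampos, ← hsetφg]
    have h2 : ¬ ({y ∈ Ioo (0:ℝ) 1 | 1 / ((n:ℝ) + 1) < ψ y} ⊆ Ioc 0 x) := by
      intro hsub
      have h3 := measure_mono (μ := volume) hsub
      rw [h1, Real.volume_Ioc, sub_zero] at h3
      exact absurd (lt_of_lt_of_le hn h3) (lt_irrefl _)
    obtain ⟨y, hy1, hy2⟩ := not_subset.1 h2
    have hxy : x < y := by
      by_contra hxy
      push_neg at hxy
      exact hy2 ⟨hy1.1.1, hxy⟩
    calc (0:ℝ) < 1 / ((n:ℝ) + 1) := hlampos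
      _ < ψ y := hy1.2
      _ ≤ ψ x := hanti hx hy1.1 hxy.le
  -- measurable indicator version of ψ
  have hS : ∀ lam : ℝ, MeasurableSet {x ∈ Ioo (0:ℝ) 1 | lam < ψ x} := by
    intro lam
    refine Set.OrdConnected.measurableSet ⟨fun x hx y hy z hz => ?_⟩
    have hz01 : z ∈ Ioo (0:ℝ) 1 := ⟨lt_of_lt_of_le hx.1.1 hz.1, lt_of_le_of_lt hz.2 hy.1.2⟩
    exact ⟨hz01, lt_of_lt_of_le hy.2 (hanti hz01 hy.1 hz.2)⟩
  set ψ' : ℝ → ℝ := (Ioo (0:ℝ) 1).indicator ψ with hψ'def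
  have hψ'meas : Measurable ψ' := by
    apply measurable_of_Ioi
    intro lam
    rcases lt_or_ge lam 0 with h | h
    · have he : ψ' ⁻¹' Ioi lam = {x ∈ Ioo (0:ℝ) 1 | lam < ψ x} ∪ (Ioo (0:ℝ) 1)ᶜ := by
        ext x
        simp only [mem_preimage, mem_Ioi, hψ'def, indicator, mem_union, mem_setOf_eq,
          mem_compl_iff]
        by_cases hx : x ∈ Ioo (0:ℝ) 1 <;> simp [hx, h]
      rw [he]
      exact (hS lam).union hIoo.compl
    · have he : ψ' ⁻¹' Ioi lam = {x ∈ Ioo (0:ℝ) 1 | lam < ψ x} := by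
        ext x
        simp only [mem_preimage, mem_Ioi, hψ'def, indicator, mem_setOf_eq]
        by_cases hx : x ∈ Ioo (0:ℝ) 1 <;> simp [hx, not_lt.2 h]
      rw [he]
      exact hS lam
  have hψae : ∀ a b : ℝ, 0 ≤ a → b ≤ 1 → ψ =ᵐ[volume.restrict (Ioo a b)] ψ' := by
    intro a b ha hb
    filter_upwards [ae_restrict_mem measurableSet_Ioo] with x hx
    have hx01 : x ∈ Ioo (0:ℝ) 1 := ⟨lt_of_le_of_lt ha hx.1, lt_of_lt_of_le hx.2 hb⟩
    rw [hψ'def, indicator_of_mem hx01]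
  have hψ'nn : ∀ x, 0 ≤ ψ' x := by
    intro x
    rw [hψ'def]
    by_cases hx : x ∈ Ioo (0:ℝ) 1
    · rw [indicator_of_mem hx]; exact (hψpos x hx).le
    · rw [indicator_of_notMem hx]
  set Gind : ℝ → ℝ := (Ioo (0:ℝ) 1).indicator g with hGdef
  have hGmeas : Measurable Gind := hgmeas.indicator hIoo
  have hGae : g =ᵐ[volume.restrict (Ioo (0:ℝ) 1)] Gind := by
    filter_upwards [ae_restrict_mem hIoo] with x hx
    rw [hGdef, indicator_of_mem hx]
  have hGnn : 0 ≤ᵐ[volume.restrict (Ioo (0:ℝ) 1)] Gind := by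
    filter_upwards [hg0', hGae] with x h1 h2
    rw [← h2]; exact h1
  -- distribution function identity
  have hdistrib : ∀ lam : ℝ, 0 < lam →
      (volume.restrict (Ioo (0:ℝ) 1)) {a | lam < ψ' a} =
        (volume.restrict (Ioo (0:ℝ) 1)) {a | lam < Gind a} := by
    intro lam hlam
    have e1 : {a | lam < ψ' a} = {x ∈ Ioo (0:ℝ) 1 | lam < ψ x} := by
      ext x
      simp only [mem_setOf_eq, hψ'def, indicator]
      by_cases hx : x ∈ Ioo (0:ℝ) 1 <;> simp [hx, not_lt.2 hlam.le]
    have e2 : {a | lam < Gind a} = {x ∈ Ioo (0:ℝ) 1 | lam < g x} := by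
      ext x
      simp only [mem_setOf_eq, hGdef, indicator]
      by_cases hx : x ∈ Ioo (0:ℝ) 1 <;> simp [hx, not_lt.2 hlam.le]
    rw [e1, e2, Measure.restrict_apply' hIoo, Measure.restrict_apply' hIoo,
      inter_eq_self_of_subset_left (fun y (hy : y ∈ {x ∈ Ioo (0:ℝ) 1 | lam < ψ x}) => hy.1),
      inter_eq_self_of_subset_left (fun y (hy : y ∈ {x ∈ Ioo (0:ℝ) 1 | lam < g x}) => hy.1),
      hequi lam hlam, ← hsetφg]
  -- integrability of ψ
  have hψint : IntegrableOn ψ (Ioo (0:ℝ) 1) := by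
    constructor
    · exact hψ'meas.aestronglyMeasurable.congr (hψae 0 1 le_rfl le_rfl).symm
    · rw [hasFiniteIntegral_def]
      have e1 : ∫⁻ a, ‖ψ a‖ₑ ∂(volume.restrict (Ioo (0:ℝ) 1)) =
          ∫⁻ a, ENNReal.ofReal (ψ' a) ∂(volume.restrict (Ioo (0:ℝ) 1)) := by
        apply lintegral_congr_ae
        filter_upwards [hψae 0 1 le_rfl le_rfl, ae_restrict_mem hIoo] with x h1 h2
        rw [← h1, Real.enorm_eq_ofReal (hψpos x h2).le]
      have e2 : ∫⁻ a, ENNReal.ofReal (ψ' a) ∂(volume.restrict (Ioo (0:ℝ) 1)) =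
          ∫⁻ a, ENNReal.ofReal (Gind a) ∂(volume.restrict (Ioo (0:ℝ) 1)) := by
        rw [lintegral_eq_lintegral_meas_lt _ (Eventually.of_forall hψ'nn)
            hψ'meas.aemeasurable,
          lintegral_eq_lintegral_meas_lt _ hGnn hGmeas.aemeasurable]
        apply lintegral_congr_ae
        filter_upwards [ae_restrict_mem measurableSet_Ioi] with lam hlam
        exact hdistrib lam hlam
      have e3 : ∫⁻ a, ENNReal.ofReal (Gind a) ∂(volume.restrict (Ioo (0:ℝ) 1)) < ⊤ := by
        refine lt_of_le_of_lt (lintegral_mono fun x => ?_) hgint.2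
        rw [hGdef]
        by_cases hx : x ∈ Ioo (0:ℝ) 1
        · rw [indicator_of_mem hx]; exact Real.ofReal_le_enorm _
        · rw [indicator_of_notMem hx]; simp
      rw [e1, e2]; exact e3
  -- layer cake comparison for truncations
  have hmaxeq : ∀ m : ℝ, 0 < m →
      ∫ x in Ioo (0:ℝ) 1, max (ψ x - m) 0 = ∫ x in Ioo (0:ℝ) 1, max (g x - m) 0 := by
    intro m hm
    have hconst : IntegrableOn (fun _ : ℝ => m) (Ioo (0:ℝ) 1) :=
      integrableOn_const hvol01.ne
    have hint1 : IntegrableOn (fun x => max (ψ x - m) 0) (Ioo (0:ℝ) 1) :=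
      (hψint.sub hconst).pos_part
    have hint2 : IntegrableOn (fun x => max (g x - m) 0) (Ioo (0:ℝ) 1) :=
      (hgint.sub hconst).pos_part
    have E1 : ∫ x in Ioo (0:ℝ) 1, max (ψ x - m) 0 =
        ENNReal.toReal (∫⁻ x, ENNReal.ofReal (max (ψ x - m) 0)
          ∂(volume.restrict (Ioo (0:ℝ) 1))) :=
      integral_eq_lintegral_of_nonneg_ae (Eventually.of_forall fun x => le_max_right _ _)
        hint1.aestronglyMeasurable
    have E2 : ∫ x in Ioo (0:ℝ) 1, max (g x - m) 0 =
        ENNReal.toReal (∫⁻ x, ENNReal.ofReal (max (g x - m) 0)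
          ∂(volume.restrict (Ioo (0:ℝ) 1))) :=
      integral_eq_lintegral_of_nonneg_ae (Eventually.of_forall fun x => le_max_right _ _)
        hint2.aestronglyMeasurable
    rw [E1, E2]
    congr 1
    have hm1 : Measurable fun x => max (ψ' x - m) 0 :=
      (hψ'meas.sub measurable_const).max measurable_const
    have hm2 : Measurable fun x => max (Gind x - m) 0 :=
      (hGmeas.sub measurable_const).max measurable_const
    have hshift : ∀ (F : ℝ → ℝ) (lam : ℝ), 0 < lam →
        {a | lam < max (F a - m) 0} = {a | (m + lam) < F a} := by
      intro F lam hlam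
      ext x
      simp only [mem_setOf_eq, lt_max_iff]
      constructor
      · rintro (h | h)
        · linarith
        · exact absurd h (not_lt.2 hlam.le)
      · intro h; exact Or.inl (by linarith)
    calc ∫⁻ x, ENNReal.ofReal (max (ψ x - m) 0) ∂(volume.restrict (Ioo (0:ℝ) 1))
        = ∫⁻ x, ENNReal.ofReal (max (ψ' x - m) 0) ∂(volume.restrict (Ioo (0:ℝ) 1)) := by
          apply lintegral_congr_ae
          filter_upwards [hψae 0 1 le_rfl le_rfl] with x hx
          rw [hx]
      _ = ∫⁻ lam in Ioi 0, (volume.restrict (Ioo (0:ℝ) 1)) {a | lam < max (ψ' a - m) 0} :=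
          lintegral_eq_lintegral_meas_lt _
            (Eventually.of_forall fun x => le_max_right _ _) hm1.aemeasurable
      _ = ∫⁻ lam in Ioi 0, (volume.restrict (Ioo (0:ℝ) 1)) {a | lam < max (Gind a - m) 0} := by
          apply lintegral_congr_ae
          filter_upwards [ae_restrict_mem measurableSet_Ioi] with lam hlam
          rw [hshift ψ' lam hlam, hshift Gind lam hlam]
          exact hdistrib (m + lam) (add_pos hm (mem_Ioi.1 hlam))
      _ = ∫⁻ x, ENNReal.ofReal (max (Gind x - m) 0) ∂(volume.restrict (Ioo (0:ℝ) 1)) :=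
          (lintegral_eq_lintegral_meas_lt _
            (Eventually.of_forall fun x => le_max_right _ _) hm2.aemeasurable).symm
      _ = ∫⁻ x, ENNReal.ofReal (max (g x - m) 0) ∂(volume.restrict (Ioo (0:ℝ) 1)) := by
          apply lintegral_congr_ae
          filter_upwards [hGae] with x hx
          rw [hx]
  -- the pointwise estimate (second conclusion)
  have key : ∀ t ∈ Ioo (0:ℝ) 1, t⁻¹ * ∫ u in Ioo (0:ℝ) t, ψ u ≤ c * ψ t := by
    intro t ht
    set m : ℝ := ψ t with hmdef
    have hm : 0 < m := hψpos t ht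
    have hsub0t : Ioo (0:ℝ) t ⊆ Ioo (0:ℝ) 1 := fun y hy => ⟨hy.1, lt_trans hy.2 ht.2⟩
    have hψintt : IntegrableOn ψ (Ioo (0:ℝ) t) := hψint.mono_set hsub0t
    have hconst : IntegrableOn (fun _ : ℝ => m) (Ioo (0:ℝ) 1) :=
      integrableOn_const hvol01.ne
    have himax : IntegrableOn (fun x => max (ψ x - m) 0) (Ioo (0:ℝ) 1) :=
      (hψint.sub hconst).pos_part
    have hgmax : IntegrableOn (fun x => max (g x - m) 0) (Ioo (0:ℝ) 1) :=
      (hgint.sub hconst).pos_part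
    -- step B
    have hB : ∫ u in Ioo (0:ℝ) t, ψ u ≤ m * t + ∫ x in Ioo (0:ℝ) 1, max (ψ x - m) 0 := by
      have hi2 : IntegrableOn (fun x => m + max (ψ x - m) 0) (Ioo (0:ℝ) t) :=
        (integrableOn_const (lt_of_le_of_lt (measure_mono hsub0t) hvol01).ne).add
          (himax.mono_set hsub0t)
      have h1 : ∫ u in Ioo (0:ℝ) t, ψ u ≤ ∫ u in Ioo (0:ℝ) t, (m + max (ψ u - m) 0) := by
        refine integral_mono hψintt hi2 fun x => ?_
        have := le_max_left (ψ x - m) 0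
        linarith
      have h2 : ∫ u in Ioo (0:ℝ) t, (m + max (ψ u - m) 0) =
          m * t + ∫ u in Ioo (0:ℝ) t, max (ψ u - m) 0 := by
        rw [integral_add (integrableOn_const (C := m)
            (lt_of_le_of_lt (measure_mono hsub0t) hvol01).ne)
            (himax.mono_set hsub0t)]
        congr 1
        rw [setIntegral_const, measureReal_def, Real.volume_Ioo, sub_zero, ENNReal.toReal_ofReal ht.1.le,
          smul_eq_mul, mul_comm]
      have h3 : ∫ u in Ioo (0:ℝ) t, max (ψ u - m) 0 ≤ ∫ x in Ioo (0:ℝ) 1, max (ψ x - m) 0 :=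
        setIntegral_mono_set himax (Eventually.of_forall fun x => le_max_right _ _)
          (HasSubset.Subset.eventuallyLE hsub0t)
      linarith
    -- step D : core bound on the g-side truncation
    have hD : ∫ x in Ioo (0:ℝ) 1, max (g x - m) 0 ≤ (c - 1) * m * t := by
      set H : Set ℝ := {x ∈ Ioo (0:ℝ) 1 | m < g x} with hHdef
      have hHmeas : MeasurableSet H :=
        hIoo.inter (measurableSet_lt measurable_const hgmeas)
      have hHsub : H ⊆ Ioo (0:ℝ) 1 := fun y hy => hy.1
      have hHvol : volume H ≤ ENNReal.ofReal t := by
        have h1 : volume {x ∈ Ioo (0:ℝ) 1 | m < ψ x} = volume H := by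
          rw [hequi m hm, ← hsetφg]
        have h2 : {x ∈ Ioo (0:ℝ) 1 | m < ψ x} ⊆ Ioc 0 t := by
          intro y hy
          have hyt : y ≤ t := by
            by_contra hyt
            push_neg at hyt
            exact absurd (hanti ht hy.1 hyt.le) (not_le.2 hy.2)
          exact ⟨hy.1.1, hyt⟩
        calc volume H = volume {x ∈ Ioo (0:ℝ) 1 | m < ψ x} := h1.symm
          _ ≤ volume (Ioc (0:ℝ) t) := measure_mono h2
          _ = ENNReal.ofReal t := by rw [Real.volume_Ioc, sub_zero]
      have hHfin : volume H ≠ ⊤ := (lt_of_le_of_lt hHvol ENNReal.ofReal_lt_top).ne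
      set sH : ℝ := (volume H).toReal with hsdef
      have hs_le : sH ≤ t := ENNReal.toReal_le_of_le_ofReal ht.1.le hHvol
      have hs0 : 0 ≤ sH := ENNReal.toReal_nonneg
      -- covering bound:  ∫_H g ≤ c m s
      have hHg : ∫ x in H, g x ≤ c * m * sH := by
        have hmain : ∀ n : ℕ, ∫ x in H, g x ≤
            c * m * (sH + (1 - t) / 2 * (1 / (n + 1))) := by
          intro n
          set ε : ℝ := (1 - t) / 2 * (1 / ((n:ℝ) + 1)) with hεdef
          have hεpos : 0 < ε := by
            have h1t : 0 < 1 - t := by linarith [ht.2]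
            positivity
          have hεlt : ε < 1 - t := by
            have h1t : 0 < 1 - t := by linarith [ht.2]
            have h2 : 1 / ((n:ℝ) + 1) ≤ 1 := by
              rw [div_le_one (by positivity)]
              have : (0:ℝ) ≤ n := Nat.cast_nonneg n
              linarith
            calc ε ≤ (1 - t) / 2 * 1 := by
                  rw [hεdef]
                  exact mul_le_mul_of_nonneg_left h2 (by linarith)
              _ < 1 - t := by linarith
          obtain ⟨U₀, hHU₀, hU₀open, hU₀vol⟩ :=
            Set.exists_isOpen_lt_add H hHfin (ENNReal.ofReal_pos.2 hεpos).ne'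
          set U : Set ℝ := U₀ ∩ Ioo (0:ℝ) 1 with hUdef
          have hUopen : IsOpen U := hU₀open.inter isOpen_Ioo
          have hUsub : U ⊆ Ioo (0:ℝ) 1 := inter_subset_right
          have hHU : H ⊆ U := fun y hy => ⟨hHU₀ hy, hy.1⟩
          have hUvol' : volume U ≤ ENNReal.ofReal (sH + ε) := by
            rw [ENNReal.ofReal_add hs0 hεpos.le, hsdef, ENNReal.ofReal_toReal hHfin]
            exact le_trans (measure_mono inter_subset_left) hU₀vol.le
          have hUlt : volume U < 1 := by
            refine lt_of_le_of_lt hUvol' ?_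
            rw [← ENNReal.ofReal_one]
            exact ENNReal.ofReal_lt_ofReal_iff_of_nonneg (by linarith) |>.2 (by linarith)
          have hKIB : ∀ p q : ℝ, 0 ≤ p → p < q → q ≤ 1 → volume (Ioo p q \ U) ≠ 0 →
              ∫ x in Ioo p q, g x ≤ c * m * (q - p) := by
            intro p q hp hpq hq hvne
            have hsubpq : Ioo p q ⊆ Ioo (0:ℝ) 1 := fun y hy =>
              ⟨lt_of_le_of_lt hp hy.1, lt_of_lt_of_le hy.2 hq⟩
            have hbdd : IsBoundedUnder (· ≥ ·) (ae (volume.restrict (Ioo p q))) g := by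
              refine ⟨0, ?_⟩
              rw [eventually_map]
              exact (ae_restrict_of_ae_restrict_of_subset hsubpq hg0').mono fun x h => h
            have hess : essInf g (volume.restrict (Ioo p q)) ≤ m := by
              by_contra hlt
              push_neg at hlt
              have hae := ae_lt_of_lt_essInf hlt hbdd
              rw [ae_iff] at hae
              have hsubbad : Ioo p q \ U ⊆ {x | ¬ m < g x} := by
                intro y hy
                have hy01 : y ∈ Ioo (0:ℝ) 1 := hsubpq hy.1
                simp only [mem_setOf_eq, not_lt]
                by_contra hgt
                push_neg at hgt
                exact hy.2 (hHU ⟨hy01, hgt⟩)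
              have h0 := measure_mono_null hsubbad hae
              rw [Measure.restrict_apply' measurableSet_Ioo,
                inter_eq_self_of_subset_left diff_subset] at h0
              exact hvne h0
            have h1 := hA1g p q hp hpq hq
            have h2 : ∫ x in Ioo p q, g x =
                (q - p) * ((q - p)⁻¹ * ∫ x in Ioo p q, g x) :=
              (mul_inv_cancel_left₀ (by linarith : q - p ≠ 0) _).symm
            rw [h2]
            calc (q - p) * ((q - p)⁻¹ * ∫ x in Ioo p q, g x)
                ≤ (q - p) * (c * essInf g (volume.restrict (Ioo p q))) :=
                  mul_le_mul_of_nonneg_left h1 (by linarith)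
              _ ≤ (q - p) * (c * m) :=
                  mul_le_mul_of_nonneg_left
                    (mul_le_mul_of_nonneg_left hess hc0.le) (by linarith)
              _ = c * m * (q - p) := by ring
          have hcov := cover_bound g c m (mul_nonneg hc0.le hm.le) hg0' hgint
            U hUopen hUsub hUlt hKIB
          have h1 : ∫ x in H, g x ≤ ∫ x in U, g x :=
            setIntegral_mono_set (hgint.mono_set hUsub)
              (ae_restrict_of_ae_restrict_of_subset hUsub hg0')
              (HasSubset.Subset.eventuallyLE hHU)
          refine le_trans h1 (le_trans hcov ?_)
          exact mul_le_mul_of_nonneg_left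
            (ENNReal.toReal_le_of_le_ofReal (by linarith) hUvol')
            (mul_nonneg hc0.le hm.le)
        have h0 : Tendsto (fun n : ℕ => c * m * (sH + (1 - t) / 2 * (1 / (n + 1))))
            atTop (nhds (c * m * sH)) := by
          have h1 := tendsto_one_div_add_atTop_nhds_zero_nat.const_mul ((1 - t) / 2)
          rw [mul_zero] at h1
          have h2 : Tendsto (fun n : ℕ => sH + (1 - t) / 2 * (1 / (n + 1)))
              atTop (nhds sH) := by
            simpa using (tendsto_const_nhds (x := sH) (f := (atTop : Filter ℕ))).add h1
          have := h2.const_mul (c * m)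
          simpa [mul_comm] using this
        exact ge_of_tendsto' h0 hmain
      -- split the integral over H
      have hsplit : ∫ x in Ioo (0:ℝ) 1, max (g x - m) 0 = (∫ x in H, g x) - sH * m := by
        have hunion : Ioo (0:ℝ) 1 = H ∪ (Ioo (0:ℝ) 1 \ H) := (union_diff_cancel hHsub).symm
        have hdisjHD : Disjoint H (Ioo (0:ℝ) 1 \ H) := disjoint_sdiff_right
        have hintH : IntegrableOn (fun x => max (g x - m) 0) H := hgmax.mono_set hHsub
        have hintD : IntegrableOn (fun x => max (g x - m) 0) (Ioo (0:ℝ) 1 \ H) :=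
          hgmax.mono_set diff_subset
        rw [hunion, setIntegral_union hdisjHD (hIoo.diff hHmeas) hintH hintD]
        have hzero : ∫ x in Ioo (0:ℝ) 1 \ H, max (g x - m) 0 = 0 := by
          rw [setIntegral_congr_fun (hIoo.diff hHmeas)
            (fun x hx => max_eq_right (by
              have : ¬ m < g x := fun hgt => hx.2 ⟨hx.1, hgt⟩
              linarith [not_lt.1 this]))]
          simp
        have hgm : ∫ x in H, max (g x - m) 0 = ∫ x in H, (g x - m) :=
          setIntegral_congr_fun hHmeas fun x hx => max_eq_left (by linarith [hx.2])
        rw [hzero, add_zero, hgm,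
          integral_sub (hgint.mono_set hHsub)
            (integrableOn_const (lt_of_le_of_lt hHvol ENNReal.ofReal_lt_top).ne)]
        congr 1
        rw [setIntegral_const, smul_eq_mul, measureReal_def]
      calc ∫ x in Ioo (0:ℝ) 1, max (g x - m) 0 = (∫ x in H, g x) - sH * m := hsplit
        _ ≤ c * m * sH - sH * m := by linarith
        _ = (c - 1) * m * sH := by ring
        _ ≤ (c - 1) * m * t := mul_le_mul_of_nonneg_left hs_le (mul_nonneg (by linarith) hm.le)
    -- combine
    have hC := hmaxeq m hm
    have hfin : ∫ u in Ioo (0:ℝ) t, ψ u ≤ t * (c * m) := by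
      have h1 : m * t + (c - 1) * m * t = t * (c * m) := by ring
      linarith [hB, hD, hC.le, hC.ge]
    calc t⁻¹ * ∫ u in Ioo (0:ℝ) t, ψ u ≤ t⁻¹ * (t * (c * m)) :=
          mul_le_mul_of_nonneg_left hfin (inv_nonneg.2 ht.1.le)
      _ = c * m := inv_mul_cancel_left₀ ht.1.ne' _
  refine ⟨?_, key⟩
  intro a b ha hab hb1
  have hbpos : 0 < b := lt_of_le_of_lt ha hab
  set u : ℕ → ℝ := fun n => b - (b - a) / (n + 2) with hu
  have humem : ∀ n, u n ∈ Ioo a b := by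
    intro n
    have hpos2 : (0:ℝ) < (n:ℝ) + 2 := by positivity
    constructor
    · have h2 : (b - a) / ((n:ℝ) + 2) < b - a := by
        rw [div_lt_iff₀ hpos2]
        nlinarith
      simp only [hu]
      linarith
    · have h3 : 0 < (b - a) / ((n:ℝ) + 2) := div_pos (by linarith) hpos2
      simp only [hu]
      linarith
  have hu01 : ∀ n, u n ∈ Ioo (0:ℝ) 1 := fun n =>
    ⟨lt_of_le_of_lt ha (humem n).1, lt_of_lt_of_le (humem n).2 hb1⟩
  have humono : Monotone u := by
    intro i j hij
    simp only [hu]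
    have h1 : (b - a) / ((j:ℝ) + 2) ≤ (b - a) / ((i:ℝ) + 2) := by
      apply div_le_div_of_nonneg_left (by linarith) (by positivity)
      have : (i:ℝ) ≤ (j:ℝ) := Nat.cast_le.2 hij
      linarith
    linarith
  have hutend : Tendsto u atTop (nhds b) := by
    have h1 := tendsto_one_div_add_atTop_nhds_zero_nat.const_mul (b - a)
    rw [mul_zero] at h1
    have h2 : Tendsto (fun n : ℕ => (b - a) / (n + 2)) atTop (nhds 0) := by
      have h3 := h1.comp (tendsto_add_atTop_nat 1)
      refine h3.congr fun n => ?_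
      simp only [Function.comp]
      push_cast
      ring
    have h4 : Tendsto (fun n : ℕ => b - (b - a) / (n + 2)) atTop (nhds (b - 0)) :=
      (tendsto_const_nhds (x := b) (f := (atTop : Filter ℕ))).sub h2
    rw [sub_zero] at h4
    exact h4
  set L : ℝ := ⨅ n, ψ (u n) with hLdef
  have hbddL : BddBelow (range fun n => ψ (u n)) := by
    refine ⟨0, ?_⟩
    rintro y ⟨n, rfl⟩
    exact (hψpos _ (hu01 n)).le
  have hanti_seq : Antitone fun n => ψ (u n) := fun i j hij =>
    hanti (hu01 i) (hu01 j) (humono hij)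
  have htendL : Tendsto (fun n => ψ (u n)) atTop (nhds L) :=
    tendsto_atTop_ciInf hanti_seq hbddL
  have hLpt : ∀ x ∈ Ioo a b, L ≤ ψ x := by
    intro x hx
    obtain ⟨n, hn⟩ := (hutend.eventually (eventually_gt_nhds hx.2)).exists
    refine le_trans (ciInf_le hbddL n) ?_
    exact hanti ⟨lt_of_le_of_lt ha hx.1, lt_of_lt_of_le hx.2 hb1⟩ (hu01 n) hn.le
  have hLess : L ≤ essInf ψ (volume.restrict (Ioo a b)) := by
    have hcob : IsCoboundedUnder (· ≥ ·) (ae (volume.restrict (Ioo a b))) ψ := by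
      set mid : ℝ := (a + b) / 2 with hmid
      have hmidab : mid ∈ Ioo a b := ⟨by simp only [hmid]; linarith, by simp only [hmid]; linarith⟩
      have hmid01 : mid ∈ Ioo (0:ℝ) 1 :=
        ⟨lt_of_le_of_lt ha hmidab.1, lt_of_lt_of_le hmidab.2 hb1⟩
      refine ⟨ψ mid, fun r hr => ?_⟩
      rw [eventually_map, ae_iff] at hr
      by_contra hcon
      push_neg at hcon
      have hsubbad : Ioo mid b ⊆ {x | ¬ ψ x ≥ r} := by
        intro y hy
        have hy01 : y ∈ Ioo (0:ℝ) 1 :=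
          ⟨lt_of_le_of_lt ha (lt_trans hmidab.1 hy.1), lt_of_lt_of_le hy.2 hb1⟩
        simp only [mem_setOf_eq, not_le, ge_iff_le]
        exact lt_of_le_of_lt (hanti hmid01 hy01 hy.1.le) hcon
      have h0 := measure_mono_null hsubbad hr
      rw [Measure.restrict_apply' measurableSet_Ioo,
        inter_eq_self_of_subset_left (Ioo_subset_Ioo_left hmidab.1.le)] at h0
      rw [Real.volume_Ioo] at h0
      have : (0:ℝ) < b - mid := by simp only [hmid]; linarith
      exact absurd h0 (ENNReal.ofReal_pos.2 this).ne'
    refine le_liminf_of_le hcob ?_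
    filter_upwards [ae_restrict_mem measurableSet_Ioo] with x hx
    exact hLpt x hx
  have hintb : IntegrableOn ψ (Ioo 0 b) :=
    hψint.mono_set fun y hy => ⟨hy.1, lt_of_lt_of_le hy.2 hb1⟩
  have hAavg : (b - a)⁻¹ * ∫ x in Ioo a b, ψ x ≤ b⁻¹ * ∫ x in Ioo (0:ℝ) b, ψ x := by
    rcases eq_or_lt_of_le ha with heq | ha'
    · rw [← heq, sub_zero]
    · have hiab : IntegrableOn ψ (Ioo a b) :=
        hψint.mono_set fun y hy => ⟨lt_of_le_of_lt ha hy.1, lt_of_lt_of_le hy.2 hb1⟩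
      have hi0a : IntegrableOn ψ (Ioo 0 a) :=
        hψint.mono_set fun y hy => ⟨hy.1, lt_of_lt_of_le (lt_trans hy.2 hab) hb1⟩
      have hvolab : volume (Ioo a b) < ⊤ := by
        rw [Real.volume_Ioo]; exact ENNReal.ofReal_lt_top
      set Av : ℝ := (b - a)⁻¹ * ∫ x in Ioo a b, ψ x with hAvdef
      have hpt : ∀ x ∈ Ioo (0:ℝ) a, Av ≤ ψ x := by
        intro x hx
        have hx01 : x ∈ Ioo (0:ℝ) 1 :=
          ⟨hx.1, lt_of_lt_of_le (lt_trans hx.2 hab) hb1⟩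
        have h1 : ∫ y in Ioo a b, ψ y ≤ ∫ y in Ioo a b, (fun _ => ψ x) y := by
          refine setIntegral_mono_on hiab
            (integrableOn_const hvolab.ne) measurableSet_Ioo fun y hy => ?_
          exact hanti hx01 ⟨lt_of_le_of_lt ha hy.1, lt_of_lt_of_le hy.2 hb1⟩
            (le_of_lt (lt_trans hx.2 hy.1))
        have h2 : ∫ y in Ioo a b, (fun _ => ψ x) y = (b - a) * ψ x := by
          rw [setIntegral_const, measureReal_def, Real.volume_Ioo,
            ENNReal.toReal_ofReal (by linarith : (0:ℝ) ≤ b - a), smul_eq_mul]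
        have h3 : (b - a)⁻¹ * ∫ y in Ioo a b, ψ y ≤ (b - a)⁻¹ * ((b - a) * ψ x) :=
          mul_le_mul_of_nonneg_left (le_trans h1 (le_of_eq h2))
            (inv_nonneg.2 (by linarith))
        rwa [inv_mul_cancel_left₀ (by linarith : b - a ≠ 0)] at h3
      have hsplit : ∫ x in Ioo (0:ℝ) b, ψ x =
          (∫ x in Ioo (0:ℝ) a, ψ x) + ∫ x in Ioo a b, ψ x := by
        have haeq : (Ioo (0:ℝ) a ∪ Ioo a b : Set ℝ) =ᵐ[volume] (Ioo (0:ℝ) b : Set ℝ) := by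
          rw [ae_eq_set]
          constructor
          · have he : (Ioo (0:ℝ) a ∪ Ioo a b) \ Ioo (0:ℝ) b = ∅ := by
              rw [diff_eq_empty]
              exact union_subset (Ioo_subset_Ioo_right hab.le) (Ioo_subset_Ioo_left ha)
            rw [he]; exact measure_empty
          · refine measure_mono_null (fun y hy => ?_) (Real.volume_singleton (a := a))
            have h1 : y ∉ Ioo (0:ℝ) a ∧ y ∉ Ioo a b := by
              constructor <;> intro hmem <;> exact hy.2 (by first | exact Or.inl hmem | exact Or.inr hmem)
            have h2 : ¬ y < a := fun hlt => h1.1 ⟨hy.1.1, hlt⟩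
            have h3 : ¬ a < y := fun hlt => h1.2 ⟨hlt, hy.1.2⟩
            have : y = a := le_antisymm (not_lt.1 h3) (not_lt.1 h2)
            exact this ▸ mem_singleton a
        rw [← setIntegral_congr_set haeq,
          setIntegral_union (Set.disjoint_left.2 fun y h1 h2 => absurd h2.1 (not_lt.2 h1.2.le)) measurableSet_Ioo hi0a hiab]
      have h0a : a * Av ≤ ∫ x in Ioo (0:ℝ) a, ψ x := by
        have h1 : ∫ x in Ioo (0:ℝ) a, (fun _ => Av) x ≤ ∫ x in Ioo (0:ℝ) a, ψ x := by
          refine setIntegral_mono_on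
            (integrableOn_const (by rw [Real.volume_Ioo]; exact ENNReal.ofReal_lt_top : volume (Ioo (0:ℝ) a) < ⊤).ne)
            hi0a measurableSet_Ioo hpt
        rwa [setIntegral_const, measureReal_def, Real.volume_Ioo, sub_zero,
          ENNReal.toReal_ofReal ha, smul_eq_mul] at h1
      have hab_eq : ∫ x in Ioo a b, ψ x = (b - a) * Av := by
        rw [hAvdef, mul_inv_cancel_left₀ (by linarith : b - a ≠ 0)]
      have hbAv : b * Av ≤ ∫ x in Ioo (0:ℝ) b, ψ x := by
        rw [hsplit, hab_eq]
        linarith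
      calc (b - a)⁻¹ * ∫ x in Ioo a b, ψ x = Av := by rw [hAvdef]
        _ = b⁻¹ * (b * Av) := (inv_mul_cancel_left₀ hbpos.ne' _).symm
        _ ≤ b⁻¹ * ∫ x in Ioo (0:ℝ) b, ψ x :=
            mul_le_mul_of_nonneg_left hbAv (inv_nonneg.2 hbpos.le)
  have hchain : b⁻¹ * ∫ x in Ioo (0:ℝ) b, ψ x ≤ c * L := by
    have hsm : ∀ n : ℕ, MeasurableSet (Ioo (0:ℝ) (u n)) := fun n => measurableSet_Ioo
    have hsmono : Monotone fun n => Ioo (0:ℝ) (u n) := fun i j hij =>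
      Ioo_subset_Ioo_right (humono hij)
    have hcup : ⋃ n, Ioo (0:ℝ) (u n) = Ioo (0:ℝ) b := by
      ext y
      simp only [mem_iUnion]
      constructor
      · rintro ⟨n, hn⟩
        exact ⟨hn.1, lt_trans hn.2 (humem n).2⟩
      · rintro ⟨h1, h2⟩
        obtain ⟨n, hn⟩ := (hutend.eventually (eventually_gt_nhds h2)).exists
        exact ⟨n, h1, hn⟩
    have hti := tendsto_setIntegral_of_monotone hsm hsmono (by rw [hcup]; exact hintb)
    rw [hcup] at hti
    have htf : Tendsto (fun n => (u n)⁻¹ * ∫ x in Ioo (0:ℝ) (u n), ψ x) atTop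
        (nhds (b⁻¹ * ∫ x in Ioo (0:ℝ) b, ψ x)) :=
      (hutend.inv₀ hbpos.ne').mul hti
    have htg : Tendsto (fun n => c * ψ (u n)) atTop (nhds (c * L)) := htendL.const_mul c
    exact le_of_tendsto_of_tendsto' htf htg fun n => key (u n) (hu01 n)
  calc (b - a)⁻¹ * ∫ x in Ioo a b, ψ x ≤ b⁻¹ * ∫ x in Ioo (0:ℝ) b, ψ x := hAavg
    _ ≤ c * L := hchain
    _ ≤ c * essInf ψ (volume.restrict (Ioo a b)) := mul_le_mul_of_nonneg_left hLess hc0.le
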